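/- Sufficient condition via min–sum swap (Equation 9): fix i ∈ V, a ∈ L, j ∈ N({i}) and ℓ ∈ L, and let x : V → L satisfy x(i) = a. For each k ∈ N({i}), let φ_k(u, m) denote the pairwise potential of the unique edge between i and k evaluated with u as the label of i and m as the label of k (i.e., φ_k(u,m) = θ_{ik}(u,m) if (i,k) ∈ E, and φ_k(u,m) = θ_{ki}(m,u) if (k,i) ∈ E). If min_{y∈L, y≠a} (θ_i(y) − θ_i(a)) + min_{y∈L, y≠a} (φ_j(y, ℓ) − φ_j(a, ℓ)) + Σ_{k∈N({i}), k≠j} min_{y∈L, y≠a, m∈L} (φ_k(y, m) − φ_k(a, m)) > 0, then every w : N({i}) → L with w(j) = ℓ is good for (x, {i}). -/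

import Mathlib

open scoped Classical

namespace MRF8

variable {V L : Type*}

/-- Energy of a labeling. -/
noncomputable def energy [Fintype V] (θu : V → L → ℝ) (E : Finset (V × V))
    (θp : V × V → L → L → ℝ) (x : V → L) : ℝ :=
  ∑ i, θu i (x i) + ∑ e ∈ E, θp e (x e.1) (x e.2)

/-- `paste S x z` is the labeling equal to `x` on `S` and to `z` off `S`. -/
def paste [DecidableEq V] (S : Finset V) (x z : V → L) : V → L :=
  fun i => if i ∈ S then x i else z i

/-- Δ(x_S → y_S | z) -/
noncomputable def delta [Fintype V] [DecidableEq V] (θu : V → L → ℝ)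
    (E : Finset (V × V)) (θp : V × V → L → L → ℝ)
    (S : Finset V) (x y z : V → L) : ℝ :=
  energy θu E θp (paste S y z) - energy θu E θp (paste S x z)

/-- The neighborhood N(S). -/
def nbhd [Fintype V] [DecidableEq V] (E : Finset (V × V)) (S : Finset V) :
    Finset V :=
  Finset.univ.filter (fun j => j ∉ S ∧ ∃ i ∈ S, (i, j) ∈ E ∨ (j, i) ∈ E)

/-- A map `w : N(S) → L` is good for `(x, S)`. -/
def Good [Fintype V] [DecidableEq V] (θu : V → L → ℝ) (E : Finset (V × V))
    (θp : V × V → L → L → ℝ) (S : Finset V) (x : V → L)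
    (w : {j // j ∈ nbhd E S} → L) : Prop :=
  ∀ z : V → L, (∀ j : {j // j ∈ nbhd E S}, z j.1 = w j) →
    ∀ y : V → L, (∃ i ∈ S, y i ≠ x i) →
      0 < delta θu E θp S x y z


lemma mem_nbhd_singleton [Fintype V] [DecidableEq V] (E : Finset (V × V)) (i k : V) :
    k ∈ nbhd E ({i} : Finset V) ↔ k ≠ i ∧ ((i, k) ∈ E ∨ (k, i) ∈ E) := by
  simp [nbhd]

theorem min_sum_swap_sufficient [Fintype V] [DecidableEq V] [Fintype L]
    (θu : V → L → ℝ) (E : Finset (V × V)) (θp : V × V → L → L → ℝ)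
    (hE1 : ∀ e ∈ E, e.1 ≠ e.2) (hE2 : ∀ i' j' : V, (i', j') ∈ E → (j', i') ∉ E)
    (hL : Nontrivial L)
    (i : V) (a : L) (j : {k // k ∈ nbhd E ({i} : Finset V)}) (ℓ : L)
    (x : V → L) (hx : x i = a)
    (φ : {k // k ∈ nbhd E ({i} : Finset V)} → L → L → ℝ)
    (hφ₁ : ∀ (k : {k // k ∈ nbhd E ({i} : Finset V)}) (u m : L),
      (i, k.1) ∈ E → φ k u m = θp (i, k.1) u m)
    (hφ₂ : ∀ (k : {k // k ∈ nbhd E ({i} : Finset V)}) (u m : L),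
      (k.1, i) ∈ E → φ k u m = θp (k.1, i) m u)
    (h : 0 <
      (⨅ y : {y : L // y ≠ a}, (θu i y.1 - θu i a)) +
      (⨅ y : {y : L // y ≠ a}, (φ j y.1 ℓ - φ j a ℓ)) +
      ∑ k ∈ Finset.univ.filter
          (fun k : {k // k ∈ nbhd E ({i} : Finset V)} => k ≠ j),
        ⨅ p : {y : L // y ≠ a} × L, (φ k p.1.1 p.2 - φ k a p.2)) :
    ∀ w : {k // k ∈ nbhd E ({i} : Finset V)} → L, w j = ℓ →
      Good θu E θp {i} x w := by
  intro w hw z hz y hy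
  obtain ⟨i', hi', hyi⟩ := hy
  rw [Finset.mem_singleton] at hi'
  rw [hi', hx] at hyi
  clear hi'
  classical
  set b := y i with hb
  set pb : V → L := fun v => if v = i then b else z v with hpbdef
  set pa : V → L := fun v => if v = i then a else z v with hpadef
  have hpy : paste ({i} : Finset V) y z = pb := by
    funext v
    by_cases hv : v = i
    · subst hv; simp [paste, pb, hb]
    · simp [paste, pb, hv]
  have hpx : paste ({i} : Finset V) x z = pa := by
    funext v
    by_cases hv : v = i
    · subst hv; simp [paste, pa, hx]
    · simp [paste, pa, hv]
  have fwd_mem : ∀ e ∈ E.filter (fun e => e.1 = i ∨ e.2 = i),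
      (if e.1 = i then e.2 else e.1) ∈ nbhd E ({i} : Finset V) := by
    intro e he
    rw [Finset.mem_filter] at he
    obtain ⟨heE, hei⟩ := he
    rw [mem_nbhd_singleton]
    by_cases h1 : e.1 = i
    · have heq : (i, e.2) = e := by rw [← h1]
      refine ⟨?_, Or.inl ?_⟩
      · simp only [if_pos h1]
        exact fun hc => hE1 e heE (h1.trans hc.symm)
      · simp only [if_pos h1]
        rwa [heq]
    · have h2 : e.2 = i := by tauto
      have heq : (e.1, i) = e := by rw [← h2]
      refine ⟨?_, Or.inr ?_⟩
      · simp only [if_neg h1]; exact h1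
      · simp only [if_neg h1]
        rwa [heq]
  have key : delta θu E θp {i} x y z
      = (θu i b - θu i a)
        + ∑ k : {k // k ∈ nbhd E ({i} : Finset V)},
            (φ k b (z k.1) - φ k a (z k.1)) := by
    rw [delta, hpy, hpx, energy, energy]
    have hU : (∑ v, θu v (pb v)) - ∑ v, θu v (pa v) = θu i b - θu i a := by
      rw [← Finset.sum_sub_distrib]
      rw [Finset.sum_eq_single i]
      · simp [pb, pa]
      · intro v _ hv
        simp [pb, pa, hv]
      · intro hcon; exact absurd (Finset.mem_univ i) hcon
    have hP : (∑ e ∈ E, θp e (pb e.1) (pb e.2)) - ∑ e ∈ E, θp e (pa e.1) (pa e.2)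
        = ∑ k : {k // k ∈ nbhd E ({i} : Finset V)},
            (φ k b (z k.1) - φ k a (z k.1)) := by
      rw [← Finset.sum_sub_distrib]
      rw [← Finset.sum_filter_add_sum_filter_not E (fun e => e.1 = i ∨ e.2 = i)]
      have h0 : ∑ e ∈ E.filter (fun e => ¬(e.1 = i ∨ e.2 = i)),
          (θp e (pb e.1) (pb e.2) - θp e (pa e.1) (pa e.2)) = 0 := by
        apply Finset.sum_eq_zero
        intro e he
        rw [Finset.mem_filter] at he
        push_neg at he
        obtain ⟨-, h1, h2⟩ := he
        simp [pb, pa, h1, h2]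
      rw [h0, add_zero]
      refine Finset.sum_bij'
        (i := fun e he => (⟨if e.1 = i then e.2 else e.1, fwd_mem e he⟩ :
            {k // k ∈ nbhd E ({i} : Finset V)}))
        (j := fun k _ => if (i, k.1) ∈ E then (i, k.1) else (k.1, i))
        (fun e he => Finset.mem_univ _) ?_ ?_ ?_ ?_
      · -- hj : backward lands in the filter
        intro k _
        beta_reduce
        rw [Finset.mem_filter]
        have hkn := (mem_nbhd_singleton E i k.1).1 k.2
        by_cases hik : (i, k.1) ∈ E
        · rw [if_pos hik]; exact ⟨hik, Or.inl rfl⟩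
        · rw [if_neg hik]
          refine ⟨?_, Or.inr rfl⟩
          rcases hkn.2 with h1 | h2
          · exact absurd h1 hik
          · exact h2
      · -- left_inv
        intro e he
        beta_reduce
        rw [Finset.mem_filter] at he
        obtain ⟨heE, hei⟩ := he
        by_cases h1 : e.1 = i
        · simp only [if_pos h1]
          have heq : (i, e.2) = e := by rw [← h1]
          rw [if_pos (heq ▸ heE)]
          exact heq
        · have h2 : e.2 = i := by tauto
          simp only [if_neg h1]
          have heq : (e.1, i) = e := by rw [← h2]
          rw [if_neg (fun hc => hE2 _ _ (heq ▸ heE) hc)]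
          exact heq
      · -- right_inv
        intro k _
        beta_reduce
        have hkn := (mem_nbhd_singleton E i k.1).1 k.2
        by_cases hik : (i, k.1) ∈ E
        · simp only [if_pos hik]
          exact Subtype.ext (by simp)
        · simp only [if_neg hik]
          exact Subtype.ext (by simp [hkn.1])
      · -- values agree
        intro e he
        beta_reduce
        have heE := (Finset.mem_filter.mp he).1
        have hei := (Finset.mem_filter.mp he).2
        by_cases h1 : e.1 = i
        · have h2 : e.2 ≠ i := fun hc => hE1 e heE (h1.trans hc.symm)
          have hik : (i, e.2) ∈ E := by
            rw [show ((i, e.2) : V × V) = e by rw [← h1]]; exact heE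
          have hk1 : (⟨if e.1 = i then e.2 else e.1, fwd_mem e he⟩ :
              {k // k ∈ nbhd E ({i} : Finset V)}).1 = e.2 := by simp [h1]
          rw [hφ₁ _ b _ (by rw [hk1]; exact hik), hφ₁ _ a _ (by rw [hk1]; exact hik)]
          rw [hk1]
          rw [show ((i, e.2) : V × V) = e by rw [← h1]]
          simp [pb, pa, h1, h2]
        · have h2 : e.2 = i := by tauto
          have hik : (e.1, i) ∈ E := by
            rw [show ((e.1, i) : V × V) = e by rw [← h2]]; exact heE
          have hk1 : (⟨if e.1 = i then e.2 else e.1, fwd_mem e he⟩ :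
              {k // k ∈ nbhd E ({i} : Finset V)}).1 = e.1 := by simp [h1]
          rw [hφ₂ _ b _ (by rw [hk1]; exact hik), hφ₂ _ a _ (by rw [hk1]; exact hik)]
          rw [hk1]
          rw [show ((e.1, i) : V × V) = e by rw [← h2]]
          simp [pb, pa, h1, h2]
    linarith [hU, hP]
  rw [key]
  have hsplit : ∑ k : {k // k ∈ nbhd E ({i} : Finset V)}, (φ k b (z k.1) - φ k a (z k.1))
      = (φ j b (z j.1) - φ j a (z j.1))
        + ∑ k ∈ Finset.univ.filter (fun k : {k // k ∈ nbhd E ({i} : Finset V)} => k ≠ j),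
            (φ k b (z k.1) - φ k a (z k.1)) := by
    rw [Finset.filter_ne']
    exact (Finset.add_sum_erase _
      (fun k : {k // k ∈ nbhd E ({i} : Finset V)} => φ k b (z k.1) - φ k a (z k.1))
      (Finset.mem_univ j)).symm
  rw [hsplit]
  have h1 : (⨅ y : {y : L // y ≠ a}, (θu i y.1 - θu i a)) ≤ θu i b - θu i a :=
    ciInf_le (Finite.bddBelow_range _) (⟨b, hyi⟩ : {y : L // y ≠ a})
  have hzj : z j.1 = ℓ := by rw [hz j, hw]
  have h2 : (⨅ y : {y : L // y ≠ a}, (φ j y.1 ℓ - φ j a ℓ))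
      ≤ φ j b (z j.1) - φ j a (z j.1) := by
    rw [hzj]
    exact ciInf_le (Finite.bddBelow_range _) (⟨b, hyi⟩ : {y : L // y ≠ a})
  have h3 : ∑ k ∈ Finset.univ.filter (fun k : {k // k ∈ nbhd E ({i} : Finset V)} => k ≠ j),
        (⨅ p : {y : L // y ≠ a} × L, (φ k p.1.1 p.2 - φ k a p.2))
      ≤ ∑ k ∈ Finset.univ.filter (fun k : {k // k ∈ nbhd E ({i} : Finset V)} => k ≠ j),
        (φ k b (z k.1) - φ k a (z k.1)) := by
    apply Finset.sum_le_sum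
    intro k _
    exact ciInf_le (Finite.bddBelow_range _) (⟨⟨b, hyi⟩, z k.1⟩ : {y : L // y ≠ a} × L)
  linarith [h, h1, h2, h3]

end MRF8
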